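/- Let $A$ be a Noetherian adic ring and $I_1 \supseteq I_2 \supseteq \cdots$ a descending chain of ideals of definition of $A$ (not necessarily a basis of neighborhoods of $0$), and let $B := \varprojlim A/I_i$ with the inverse limit topology. Suppose $B$ is adic. Then the natural map $A \to B$ is surjective, and the topology on $B$ is the $\{I_1^n B\}$-topology. -/

import Mathlib

open Filter Topology

/-- The descending chain `I` of ideals is a basis of neighborhoods of `0`
(this is the `{Iᵢ}`-topology). -/
def IsChainBasis (A : Type*) [CommRing A] [TopologicalSpace A] (I : ℕ → Ideal A) : Prop :=
  Antitone I ∧ ∀ s : Set A, s ∈ nhds (0 : A) ↔ ∃ i, (I i : Set A) ⊆ s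

/-- An ideal of definition: an open ideal all of whose elements are topologically nilpotent. -/
def IsIdealOfDefinition (A : Type*) [CommRing A] [TopologicalSpace A] (J : Ideal A) : Prop :=
  IsOpen (J : Set A) ∧ ∀ x ∈ J, Filter.Tendsto (fun n => x ^ n) Filter.atTop (nhds (0 : A))

/-- An admissible ring: a topological ring, linearly topologized with a countable chain of
ideals as a basis of neighborhoods of `0`, separated, complete, admitting an ideal of
definition. -/
structure IsAdmissible (A : Type*) [CommRing A] [TopologicalSpace A] : Prop where
  topRing : IsTopologicalRing A
  exists_chain : ∃ I : ℕ → Ideal A, IsChainBasis A I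
  separated : ∀ x : A, (∀ U ∈ nhds (0 : A), x ∈ U) → x = 0
  complete : ∀ f : ℕ → A,
    (∀ U ∈ nhds (0 : A), ∃ N, ∀ m ≥ N, ∀ n ≥ N, f m - f n ∈ U) →
    ∃ a : A, ∀ U ∈ nhds (0 : A), ∃ N, ∀ n ≥ N, a - f n ∈ U
  exists_idealOfDef : ∃ J : Ideal A, IsIdealOfDefinition A J

/-- The topology of `A` is the `J`-adic topology: the powers `J ^ n` form a basis of
neighborhoods of `0`. -/
def IsAdicTopology (A : Type*) [CommRing A] [TopologicalSpace A] (J : Ideal A) : Prop :=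
  ∀ s : Set A, s ∈ nhds (0 : A) ↔ ∃ n : ℕ, ((J ^ n : Ideal A) : Set A) ⊆ s

/-- The inverse limit `varprojlim A/Iᵢ` of the quotients along a descending chain of ideals,
realized as the subring of compatible families in `Π i, A ⧸ I i`. -/
def limSubring (A : Type*) [CommRing A] (I : ℕ → Ideal A) (hI : ∀ i, I (i + 1) ≤ I i) :
    Subring (∀ i, A ⧸ I i) where
  carrier := {g | ∀ i, Ideal.Quotient.factor (hI i) (g (i + 1)) = g i}
  zero_mem' := by intro i; simp
  one_mem' := by intro i; simp
  add_mem' := by intro a b ha hb; intro i; simp [map_add, ha i, hb i]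
  mul_mem' := by intro a b ha hb; intro i; simp [map_mul, ha i, hb i]
  neg_mem' := by intro a ha i; simp [map_neg, ha i]

/-- The inverse limit topology on `limSubring`, where each `A ⧸ I i` is discrete. -/
def limTopology (A : Type*) [CommRing A] (I : ℕ → Ideal A) (hI : ∀ i, I (i + 1) ≤ I i) :
    TopologicalSpace (limSubring A I hI) :=
  TopologicalSpace.induced Subtype.val
    (@Pi.topologicalSpace ℕ (fun i => A ⧸ I i) (fun _ => ⊥))

/-- The natural ring homomorphism `A → varprojlim A/Iᵢ`. -/
def toLim (A : Type*) [CommRing A] (I : ℕ → Ideal A) (hI : ∀ i, I (i + 1) ≤ I i) :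
    A →+* limSubring A I hI :=
  RingHom.codRestrict (Pi.ringHom fun i => Ideal.Quotient.mk (I i)) _
    (fun a i => Ideal.Quotient.factor_mk (hI i) a)

section Aux

private theorem dcAux {α : Type*} (P : ℕ → α → Prop) (R : ℕ → α → α → Prop)
    (h0 : ∃ a, P 0 a) (hs : ∀ n a, P n a → ∃ b, P (n + 1) b ∧ R n a b) :
    ∃ f : ℕ → α, (∀ n, P n (f n)) ∧ ∀ n, R n (f n) (f (n + 1)) := by
  choose g hg1 hg2 using hs
  let F : ∀ n : ℕ, {a // P n a} := fun n =>
    Nat.rec ⟨h0.choose, h0.choose_spec⟩ (fun n p => ⟨g n p.1 p.2, hg1 n p.1 p.2⟩) n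
  exact ⟨fun n => (F n).1, fun n => (F n).2, fun n => hg2 n (F n).1 (F n).2⟩

variable {A : Type*} [CommRing A] (I : ℕ → Ideal A) (hdesc : ∀ i, I (i + 1) ≤ I i)

include hdesc in
private theorem hdescLE {i j : ℕ} (h : i ≤ j) : I j ≤ I i := by
  induction j, h using Nat.le_induction with
  | base => exact le_rfl
  | succ j hij ih => exact (hdesc j).trans ih

private theorem compatAux (b : limSubring A I hdesc) (i : ℕ) :
    Ideal.Quotient.factor (hdesc i) (b.1 (i + 1)) = b.1 i := b.2 i

private theorem proj_eq (b : limSubring A I hdesc) {i j : ℕ} (h : i ≤ j) {x : A}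
    (hx : Ideal.Quotient.mk (I j) x = b.1 j) : Ideal.Quotient.mk (I i) x = b.1 i := by
  induction j, h using Nat.le_induction with
  | base => exact hx
  | succ j hij ih =>
    apply ih
    rw [← compatAux I hdesc b j, ← hx, Ideal.Quotient.factor_mk]

private theorem proj_zero (b : limSubring A I hdesc) {i j : ℕ} (h : i ≤ j)
    (hj : b.1 j = 0) : b.1 i = 0 := by
  have hx : Ideal.Quotient.mk (I j) 0 = b.1 j := by rw [map_zero, hj]
  have h2 := proj_eq I hdesc b h hx
  rwa [map_zero, eq_comm] at h2

/-- The projection as ring hom. -/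
private def prj (N : ℕ) : limSubring A I hdesc →+* A ⧸ I N :=
  (Pi.evalRingHom (fun i => A ⧸ I i) N).comp (limSubring A I hdesc).subtype

private theorem prj_toLim (N : ℕ) (x : A) :
    prj I hdesc N (toLim A I hdesc x) = Ideal.Quotient.mk (I N) x := rfl

private theorem prj_apply (N : ℕ) (b : limSubring A I hdesc) : prj I hdesc N b = b.1 N := rfl

private theorem mem_kerPrj {N : ℕ} {b : limSubring A I hdesc} :
    b ∈ RingHom.ker (prj I hdesc N) ↔ b.1 N = 0 := RingHom.mem_ker

private theorem limBasis (s : Set (limSubring A I hdesc)) :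
    s ∈ @nhds _ (limTopology A I hdesc) 0 ↔
      ∃ N : ℕ, ((RingHom.ker (prj I hdesc N) : Ideal (limSubring A I hdesc)) : Set _) ⊆ s := by
  letI piT : TopologicalSpace (∀ i, A ⧸ I i) :=
    @Pi.topologicalSpace ℕ (fun i => A ⧸ I i) (fun _ => ⊥)
  haveI : ∀ i, @DiscreteTopology (A ⧸ I i) ⊥ := fun i => @DiscreteTopology.mk _ ⊥ rfl
  have hnhds0 : @nhds (∀ i, A ⧸ I i) piT 0 = Filter.pi (fun i => pure (0 : A ⧸ I i)) := by
    rw [show (@nhds (∀ i, A ⧸ I i) piT 0) = Filter.pi (fun i => @nhds _ ⊥ (0:A ⧸ I i)) from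
      @nhds_pi ℕ (fun i => A ⧸ I i) (fun _ => ⊥) 0]
    congr 1
    funext i
    exact congrFun (@nhds_discrete _ ⊥ (this i)) 0
  have key : @nhds _ (limTopology A I hdesc) (0 : limSubring A I hdesc)
      = Filter.comap Subtype.val (@nhds _ piT 0) := @nhds_induced _ _ piT Subtype.val 0
  rw [key, Filter.mem_comap]
  constructor
  · rintro ⟨t, ht, hts⟩
    rw [hnhds0, Filter.mem_pi] at ht
    obtain ⟨F, hFfin, tt, htt, hsub⟩ := ht
    obtain ⟨N, hN⟩ := hFfin.bddAbove
    refine ⟨N, fun b hb => hts ?_⟩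
    have hb' : b.1 N = 0 := mem_kerPrj I hdesc |>.mp hb
    refine Set.mem_preimage.mpr (hsub ?_)
    intro i hi
    have : b.1 i = 0 := proj_zero I hdesc b (hN hi) hb'
    rw [show (b : ∀ i, A ⧸ I i) i = b.1 i from rfl, this]
    exact Filter.mem_pure.mp (htt i)
  · rintro ⟨N, hN⟩
    refine ⟨(fun g : ∀ i, A ⧸ I i => g N) ⁻¹' {0}, ?_, ?_⟩
    · rw [hnhds0]
      exact Filter.mem_pi_of_mem N (Filter.mem_pure.mpr rfl)
    · intro b hb
      exact hN ((mem_kerPrj I hdesc).mpr hb)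

end Aux

set_option maxHeartbeats 1000000 in
set_option synthInstance.maxHeartbeats 400000 in
/-- Let `A` be a Noetherian adic ring and `Iᵢ` a descending chain of ideals of definition,
`B = varprojlim A/Iᵢ`. If `B` is adic, then `A → B` is surjective and the topology of `B` is
the `{I₁ⁿB}`-topology. -/
theorem stmt_6 (A : Type*) [CommRing A] [TopologicalSpace A]
    (hA : IsAdmissible A) (hnoeth : IsNoetherianRing A)
    (hadic : ∃ J : Ideal A, IsAdicTopology A J)
    (I : ℕ → Ideal A) (hdesc : ∀ i, I (i + 1) ≤ I i)
    (hdef : ∀ i, IsIdealOfDefinition A (I i)) :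
    letI := limTopology A I hdesc
    (∃ JB : Ideal (limSubring A I hdesc), IsAdicTopology (limSubring A I hdesc) JB) →
      Function.Surjective (toLim A I hdesc) ∧
      IsAdicTopology (limSubring A I hdesc) (Ideal.map (toLim A I hdesc) (I 0)) := by
  letI instB := limTopology A I hdesc
  intro hBadic
  haveI := hnoeth
  obtain ⟨JB, hJB⟩ := hBadic
  obtain ⟨J, hJ⟩ := hadic
  classical
  set φ := toLim A I hdesc with hφdef
  set bI : ℕ → Ideal (limSubring A I hdesc) := fun N => RingHom.ker (prj I hdesc N) with hbIdef
  have hbasis : ∀ s : Set (limSubring A I hdesc),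
      s ∈ nhds (0 : limSubring A I hdesc) ↔ ∃ N, (bI N : Set (limSubring A I hdesc)) ⊆ s :=
    fun s => limBasis I hdesc s
  -- A-side facts
  have hJnhds : (J : Set A) ∈ nhds (0 : A) := (hJ _).mpr ⟨1, by rw [pow_one]⟩
  set T : Ideal A := J.radical with hTdef
  have hTfg : T.FG := IsNoetherian.noetherian T
  obtain ⟨cJ, hcJ⟩ : ∃ n, T ^ n ≤ J := J.exists_radical_pow_le_of_fg hTfg
  have hIT : ∀ i, I i ≤ T := by
    intro i x hx
    have htd := (hdef i).2 x hx
    have hev : ∀ᶠ n in Filter.atTop, x ^ n ∈ (J : Set A) := htd.eventually_mem hJnhds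
    obtain ⟨n, hn⟩ := hev.exists
    exact Ideal.mem_radical_iff.mpr ⟨n, hn⟩
  have hJI : ∀ i, ∃ n, J ^ n ≤ I i := by
    intro i
    obtain ⟨n, hn⟩ := (hJ _).mp ((hdef i).1.mem_nhds (I i).zero_mem)
    exact ⟨n, fun x hx => hn hx⟩
  have hTI : ∀ i, ∃ c, T ^ c ≤ I i := by
    intro i
    obtain ⟨n, hn⟩ := hJI i
    exact ⟨cJ * n, by rw [pow_mul]; exact le_trans (Ideal.pow_right_mono hcJ n) hn⟩
  obtain ⟨c0, hc0⟩ := hTI 0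
  have hI0T : I 0 ≤ T := hIT 0
  have hI0nhds : ∀ n : ℕ, ((I 0 ^ n : Ideal A) : Set A) ∈ nhds (0 : A) := by
    intro n
    refine Filter.mem_of_superset ((hJ _).mpr ⟨c0 * n, subset_rfl⟩) ?_
    have h1 : (J : Ideal A) ^ (c0 * n) ≤ I 0 ^ n := by
      rw [pow_mul]
      exact Ideal.pow_right_mono (le_trans (Ideal.pow_right_mono Ideal.le_radical c0) hc0) n
    exact h1
  -- B-side basics
  have h𝔟nhds : ∀ N, ((bI N : Ideal (limSubring A I hdesc)) : Set _) ∈ nhds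
      (0 : limSubring A I hdesc) := fun N => (hbasis _).mpr ⟨N, subset_rfl⟩
  obtain ⟨N₀, hN₀⟩ : ∃ N₀, bI N₀ ≤ JB := by
    obtain ⟨N₀, h⟩ := (hbasis _).mp ((hJB _).mpr ⟨1, by rw [pow_one]⟩)
    exact ⟨N₀, fun b hb => h hb⟩
  have hbIk : ∀ N, ∃ k, JB ^ k ≤ bI N := by
    intro N
    obtain ⟨k, h⟩ := (hJB _).mp (h𝔟nhds N)
    exact ⟨k, fun b hb => h hb⟩
  have hφI : ∀ N, Ideal.map φ (I N) ≤ bI N := by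
    intro N
    rw [Ideal.map_le_iff_le_comap]
    intro x hx
    rw [Ideal.mem_comap, hbIdef]
    show prj I hdesc N (φ x) = 0
    rw [prj_toLim, Ideal.Quotient.eq_zero_iff_mem]
    exact hx
  have hGolden : ∀ N, ∃ k, I N₀ ^ k ≤ I N := by
    intro N
    obtain ⟨k, hk⟩ := hbIk N
    refine ⟨k, fun x hx => ?_⟩
    have h1 : φ x ∈ bI N₀ ^ k := by
      have h2 : φ x ∈ (Ideal.map φ (I N₀)) ^ k := by
        rw [← Ideal.map_pow]; exact Ideal.mem_map_of_mem φ hx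
      exact Ideal.pow_right_mono (hφI N₀) k h2
    have h3 : φ x ∈ bI N := hk (Ideal.pow_right_mono hN₀ k h1)
    have h4 : (φ x).1 N = 0 := (mem_kerPrj I hdesc).mp h3
    exact Ideal.Quotient.eq_zero_iff_mem.mp h4
  have hSmall : ∀ N, ∃ m, I 0 ^ m ≤ I N := by
    intro N
    obtain ⟨k, hk⟩ := hGolden N
    obtain ⟨cN0, hcN0⟩ := hTI N₀
    refine ⟨cN0 * k, ?_⟩
    calc I 0 ^ (cN0 * k) ≤ T ^ (cN0 * k) := Ideal.pow_right_mono hI0T _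
      _ = (T ^ cN0) ^ k := by rw [pow_mul]
      _ ≤ I N₀ ^ k := Ideal.pow_right_mono hcN0 k
      _ ≤ I N := hk
  have hmapPow : ∀ (M m : ℕ), I 0 ^ m ≤ I M → (Ideal.map φ (I 0)) ^ m ≤ bI M := by
    intro M m hm
    rw [← Ideal.map_pow, Ideal.map_le_iff_le_comap]
    intro z hz
    rw [Ideal.mem_comap, hbIdef]
    show prj I hdesc M (φ z) = 0
    rw [prj_toLim, Ideal.Quotient.eq_zero_iff_mem]
    exact hm hz
  -- (O)
  have hO : ∀ k, ∃ M, ∀ N, I M ≤ I N₀ ^ k ⊔ I N := by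
    intro k
    obtain ⟨k0, hk0⟩ := hbIk N₀
    have hopen : ((bI N₀ ^ k : Ideal (limSubring A I hdesc)) : Set _) ∈ nhds
        (0 : limSubring A I hdesc) := by
      refine Filter.mem_of_superset ((hJB _).mpr ⟨k0 * k, subset_rfl⟩) ?_
      have h1 : JB ^ (k0 * k) ≤ bI N₀ ^ k := by
        rw [pow_mul]; exact Ideal.pow_right_mono hk0 k
      exact h1
    obtain ⟨M, hM⟩ := (hbasis _).mp hopen
    have key : ∀ N, N₀ ≤ N → I M ≤ I N₀ ^ k ⊔ I N := by
      intro N hN x hx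
      have hφx : φ x ∈ bI N₀ ^ k := by
        apply hM
        show φ x ∈ (bI M : Set _)
        refine SetLike.mem_coe.mpr ((mem_kerPrj I hdesc).mpr ?_)
        show Ideal.Quotient.mk (I M) x = 0
        rw [Ideal.Quotient.eq_zero_iff_mem]; exact hx
      have h1 : prj I hdesc N (φ x) ∈ Ideal.map (prj I hdesc N) (bI N₀ ^ k) :=
        Ideal.mem_map_of_mem _ hφx
      have h2 : Ideal.map (prj I hdesc N) (bI N₀ ^ k)
          ≤ Ideal.map (Ideal.Quotient.mk (I N)) (I N₀ ^ k) := by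
        rw [Ideal.map_pow, Ideal.map_pow]
        apply Ideal.pow_right_mono
        rw [Ideal.map_le_iff_le_comap]
        intro b hb
        obtain ⟨y, hy⟩ := Ideal.Quotient.mk_surjective (b.1 N)
        have hy0 : y ∈ I N₀ := by
          have h5 := proj_eq I hdesc b hN hy
          rw [(mem_kerPrj I hdesc).mp hb] at h5
          exact Ideal.Quotient.eq_zero_iff_mem.mp h5
        rw [Ideal.mem_comap, prj_apply, ← hy]
        exact Ideal.mem_map_of_mem _ hy0
      have h3 : Ideal.Quotient.mk (I N) x ∈ Ideal.map (Ideal.Quotient.mk (I N)) (I N₀ ^ k) := by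
        rw [← prj_toLim I hdesc]
        exact h2 h1
      exact Ideal.mem_quotient_iff_mem_sup.mp h3
    refine ⟨M, fun N => ?_⟩
    rcases le_or_gt N₀ N with h | h
    · exact key N h
    · exact le_trans (key N₀ le_rfl) (sup_le_sup_left (hdescLE I hdesc h.le) _)
  have claimD : ∀ n : ℕ, ∃ M, bI M ≤ (Ideal.map φ (I 0)) ^ n := by
    intro n
    obtain ⟨S, hS⟩ : (I 0 ^ n).FG := IsNoetherian.noetherian _
    have hT0n : T ^ (c0 * n) ≤ I 0 ^ n := by
      rw [pow_mul]; exact Ideal.pow_right_mono hc0 n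
    have hN₀T : I N₀ ≤ T := hIT N₀
    obtain ⟨M₁, hM₁⟩ := hO (c0 * n)
    have hM₁' : ∀ N, I M₁ ≤ I 0 ^ n ⊔ I N := fun N =>
      le_trans (hM₁ N) (sup_le_sup_right (le_trans (Ideal.pow_right_mono hN₀T _) hT0n) _)
    have hK : ∀ N, ∃ K, N ≤ K ∧ M₁ ≤ K ∧ ∀ N', I K ≤ (I 0 ^ n) * I N ⊔ I N' := by
      intro N
      obtain ⟨cN, hcN⟩ := hTI N
      obtain ⟨K0, hK0⟩ := hO (c0 * n + cN)
      refine ⟨max K0 (max N M₁), le_trans (le_max_left N M₁) (le_max_right _ _),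
        le_trans (le_max_right N M₁) (le_max_right _ _), fun N' => ?_⟩
      refine le_trans (hdescLE I hdesc (le_max_left _ _))
        (le_trans (hK0 N') (sup_le_sup_right ?_ _))
      calc I N₀ ^ (c0 * n + cN) = I N₀ ^ (c0 * n) * I N₀ ^ cN := by rw [pow_add]
        _ ≤ T ^ (c0 * n) * T ^ cN :=
          Ideal.mul_mono (Ideal.pow_right_mono hN₀T _) (Ideal.pow_right_mono hN₀T _)
        _ ≤ (I 0 ^ n) * I N := Ideal.mul_mono hT0n hcN
    refine ⟨M₁, fun b hb => ?_⟩
    have hb1 : b.1 M₁ = 0 := (mem_kerPrj I hdesc).mp hb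
    choose x hxs using fun N => Ideal.Quotient.mk_surjective (I := I N) (b.1 N)
    set φg : (↥(S : Finset A) → A) → A := fun y => ∑ s : ↥(S : Finset A), (s : A) * y s
      with hφg
    have φg_add : ∀ y z, φg (y + z) = φg y + φg z := by
      intro y z
      simp only [hφg, Pi.add_apply, mul_add]
      rw [Finset.sum_add_distrib]
    have hrep : ∀ p : A, p ∈ I 0 ^ n → ∃ y, φg y = p := by
      intro p hp
      rw [← hS] at hp
      refine Submodule.span_induction (p := fun r _ => ∃ y, φg y = r) ?_ ?_ ?_ ?_ hp
      · intro v hv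
        refine ⟨fun s => if s = ⟨v, hv⟩ then 1 else 0, ?_⟩
        simp only [hφg]
        simp [mul_ite, mul_one, mul_zero, Finset.sum_ite_eq']
      · exact ⟨0, by simp [hφg]⟩
      · rintro p q hp' hq' ⟨y, hy⟩ ⟨z, hz⟩
        exact ⟨y + z, by rw [φg_add, hy, hz]⟩
      · rintro a p hp' ⟨y, hy⟩
        refine ⟨fun s => a * y s, ?_⟩
        have h9 : φg (fun s => a * y s) = a * φg y := by
          simp only [hφg, Finset.mul_sum]
          exact Finset.sum_congr rfl fun s _ => by ring
        rw [smul_eq_mul, h9, hy]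
    have hrep2 : ∀ (N : ℕ) (p : A), p ∈ (I 0 ^ n) * I N →
        ∃ z, (∀ s, z s ∈ I N) ∧ φg z = p := by
      intro N p hp
      refine Submodule.mul_induction_on hp ?_ ?_
      · intro m hm t ht
        obtain ⟨y, hy⟩ := hrep m hm
        refine ⟨fun s => y s * t, fun s => Ideal.mul_mem_left _ _ ht, ?_⟩
        have h9 : φg (fun s => y s * t) = φg y * t := by
          simp only [hφg, Finset.sum_mul]
          exact Finset.sum_congr rfl fun s _ => by ring
        rw [h9, hy]
      · rintro p q ⟨z1, hz1, hz1'⟩ ⟨z2, hz2, hz2'⟩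
        exact ⟨z1 + z2, fun s => add_mem (hz1 s) (hz2 s), by rw [φg_add, hz1', hz2']⟩
    -- the recursive Mittag-Leffler construction
    set P : ℕ → ℕ × (↥(S : Finset A) → A) → Prop := fun N p =>
      N ≤ p.1 ∧ (∀ N', I p.1 ≤ (I 0 ^ n) * I N ⊔ I N') ∧ x p.1 - φg p.2 ∈ I p.1 with hP
    set Rl : ℕ → ℕ × (↥(S : Finset A) → A) → ℕ × (↥(S : Finset A) → A) → Prop :=
      fun N p q => ∀ s, q.2 s - p.2 s ∈ I N with hRl
    have hbase : ∃ p, P 0 p := by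
      obtain ⟨K, hK1, hK2, hK3⟩ := hK 0
      have hxK : x K ∈ I M₁ := by
        have h1 : Ideal.Quotient.mk (I M₁) (x K) = b.1 M₁ := proj_eq I hdesc b hK2 (hxs K)
        rw [hb1] at h1
        exact Ideal.Quotient.eq_zero_iff_mem.mp h1
      obtain ⟨p', hp', q', hq', hpq⟩ := Submodule.mem_sup.mp (hM₁' K hxK)
      obtain ⟨y, hy⟩ := hrep p' hp'
      refine ⟨(K, y), Nat.zero_le _, hK3, ?_⟩
      have h2 : x K - φg y = q' := by rw [hy, ← hpq]; ring
      rw [h2]; exact hq'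
    have hstep : ∀ N p, P N p → ∃ q, P (N + 1) q ∧ Rl N p q := by
      rintro N ⟨κ, w⟩ ⟨hκN, hκS, hκsol⟩
      obtain ⟨K, hK1, hK2, hK3⟩ := hK (N + 1)
      have hκκ' : κ ≤ max K κ := le_max_right _ _
      have he : x (max K κ) - φg w ∈ I κ := by
        have h1 : x (max K κ) - x κ ∈ I κ := by
          have e1 : Ideal.Quotient.mk (I κ) (x (max K κ)) = b.1 κ :=
            proj_eq I hdesc b hκκ' (hxs (max K κ))
          rw [← hxs κ] at e1
          exact (Ideal.Quotient.mk_eq_mk_iff_sub_mem _ _).mp e1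
        have h2 := add_mem h1 hκsol
        rwa [show x (max K κ) - x κ + (x κ - φg w) = x (max K κ) - φg w by ring] at h2
      have he2 : x (max K κ) - φg w ∈ (I 0 ^ n) * I N ⊔ I (max K κ) := hκS (max K κ) he
      obtain ⟨p', hp', q', hq', hpq⟩ := Submodule.mem_sup.mp he2
      obtain ⟨z, hzmem, hz⟩ := hrep2 N p' hp'
      refine ⟨(max K κ, w + z), ⟨le_trans hK1 (le_max_left _ _), fun N' =>
        le_trans (hdescLE I hdesc (le_max_left K κ)) (hK3 N'), ?_⟩, fun s => ?_⟩
      · have hq2 : q' = x (max K κ) - φg w - p' := by rw [← hpq]; ring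
        have h3 : x (max K κ) - φg (w + z) = q' := by rw [φg_add, hz, hq2]; ring
        rw [h3]; exact hq'
      · simpa using hzmem s
    obtain ⟨f, hfP, hfR⟩ := dcAux P Rl hbase hstep
    have hcompatW : ∀ (s : ↥(S : Finset A)) (i : ℕ),
        Ideal.Quotient.mk (I i) ((f (i + 1)).2 s) = Ideal.Quotient.mk (I i) ((f i).2 s) :=
      fun s i => (Ideal.Quotient.mk_eq_mk_iff_sub_mem _ _).mpr (hfR i s)
    set cs : ↥(S : Finset A) → limSubring A I hdesc := fun s =>
      ⟨fun N => Ideal.Quotient.mk (I N) ((f N).2 s), fun i => by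
        rw [Ideal.Quotient.factor_mk]; exact hcompatW s i⟩ with hcs
    have hbsum : b = ∑ s : ↥(S : Finset A), φ ((s : A)) * cs s := by
      apply Subtype.ext; funext N
      have hval : ∀ v : limSubring A I hdesc, (v : ∀ i, A ⧸ I i) N = prj I hdesc N v :=
        fun v => rfl
      rw [hval, hval, map_sum]
      have hterm : ∀ s : ↥(S : Finset A), prj I hdesc N (φ (s : A) * cs s)
          = Ideal.Quotient.mk (I N) ((s : A) * (f N).2 s) := by
        intro s
        rw [map_mul, prj_toLim]
        have : prj I hdesc N (cs s) = Ideal.Quotient.mk (I N) ((f N).2 s) := rfl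
        rw [this, ← map_mul]
      rw [Finset.sum_congr rfl fun s _ => hterm s]
      have h1 : prj I hdesc N b = Ideal.Quotient.mk (I N) (x (f N).1) :=
        (proj_eq I hdesc b (hfP N).1 (hxs _)).symm
      have h2 : Ideal.Quotient.mk (I N) (x (f N).1) = Ideal.Quotient.mk (I N) (φg ((f N).2)) :=
        (Ideal.Quotient.mk_eq_mk_iff_sub_mem _ _).mpr
          (hdescLE I hdesc (hfP N).1 (hfP N).2.2)
      rw [h1, h2]
      simp only [hφg]
      rw [map_sum]
    rw [hbsum]
    apply Ideal.sum_mem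
    intro s hs
    have hsI : (s : A) ∈ I 0 ^ n := by rw [← hS]; exact Submodule.subset_span s.2
    have hfs : φ (s : A) ∈ (Ideal.map φ (I 0)) ^ n := by
      rw [← Ideal.map_pow]; exact Ideal.mem_map_of_mem φ hsI
    exact Ideal.mul_mem_right _ _ hfs
  have hsurj : Function.Surjective φ := by
    intro b
    have hstep : ∀ (k : ℕ) (a : A), b - φ a ∈ (Ideal.map φ (I 0)) ^ k →
        ∃ a', (b - φ a' ∈ (Ideal.map φ (I 0)) ^ (k + 1)) ∧ a' - a ∈ I 0 ^ k := by
      intro k a hk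
      obtain ⟨M1, hM1⟩ := claimD (k + 1)
      rw [← Ideal.map_pow] at hk
      have hr : b - φ a ∈ Ideal.span (⇑φ '' ((I 0 ^ k : Ideal A) : Set A)) := hk
      have hQ : ∃ d, d ∈ I 0 ^ k ∧ (b - φ a) - φ d ∈ bI M1 := by
        refine Submodule.span_induction
          (p := fun r _ => ∃ d, d ∈ I 0 ^ k ∧ r - φ d ∈ bI M1) ?_ ?_ ?_ ?_ hr
        · rintro v ⟨h, hh, rfl⟩
          exact ⟨h, hh, by rw [sub_self]; exact zero_mem _⟩
        · exact ⟨0, zero_mem _, by rw [map_zero, sub_zero]; exact zero_mem _⟩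
        · rintro r1 r2 h1 h2 ⟨d1, hd1, hr1⟩ ⟨d2, hd2, hr2⟩
          refine ⟨d1 + d2, add_mem hd1 hd2, ?_⟩
          have h3 := add_mem hr1 hr2
          rwa [show r1 - φ d1 + (r2 - φ d2) = r1 + r2 - φ (d1 + d2) by rw [map_add]; ring] at h3
        · rintro q r hrmem ⟨d, hd, hrd⟩
          obtain ⟨y, hy⟩ := Ideal.Quotient.mk_surjective (I := I M1) (q.1 M1)
          have hqy : q - φ y ∈ bI M1 := by
            refine (mem_kerPrj I hdesc).mpr ?_
            show q.1 M1 - (φ y).1 M1 = 0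
            rw [show (φ y).1 M1 = Ideal.Quotient.mk (I M1) y from rfl, hy, sub_self]
          refine ⟨y * d, Ideal.mul_mem_left _ y hd, ?_⟩
          have e : q • r - φ (y * d) = q * (r - φ d) + (q - φ y) * φ d := by
            rw [map_mul, smul_eq_mul]; ring
          rw [e]
          exact add_mem (Ideal.mul_mem_left _ q hrd) (Ideal.mul_mem_right _ _ hqy)
      obtain ⟨d, hd, hrd⟩ := hQ
      refine ⟨a + d, ?_, by simpa using hd⟩
      have e2 : b - φ (a + d) = (b - φ a) - φ d := by rw [map_add]; ring
      rw [e2]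
      exact hM1 hrd
    have hbase : ∃ a : A, b - φ a ∈ (Ideal.map φ (I 0)) ^ 0 :=
      ⟨0, by rw [pow_zero, Ideal.one_eq_top]; trivial⟩
    obtain ⟨a, haP, haR⟩ := dcAux (fun k a => b - φ a ∈ (Ideal.map φ (I 0)) ^ k)
      (fun k a a' => a' - a ∈ I 0 ^ k) hbase hstep
    have hincr : ∀ {p q : ℕ}, q ≤ p → a p - a q ∈ I 0 ^ q := by
      intro p q h
      induction p, h using Nat.le_induction with
      | base => simp
      | succ p hqp ih =>
        have h1 : a (p + 1) - a p ∈ I 0 ^ q := Ideal.pow_le_pow_right hqp (haR p)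
        have h2 := add_mem h1 ih
        rwa [show a (p + 1) - a p + (a p - a q) = a (p + 1) - a q by ring] at h2
    have hcauchy : ∀ U ∈ nhds (0 : A), ∃ K, ∀ m ≥ K, ∀ l ≥ K, a m - a l ∈ U := by
      intro U hU
      obtain ⟨mU, hmU⟩ := (hJ U).mp hU
      refine ⟨cJ * mU, fun m hm l hl => hmU ?_⟩
      have hJm : I 0 ^ (cJ * mU) ≤ J ^ mU := by
        calc I 0 ^ (cJ * mU) ≤ T ^ (cJ * mU) := Ideal.pow_right_mono hI0T _
          _ = (T ^ cJ) ^ mU := by rw [pow_mul]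
          _ ≤ J ^ mU := Ideal.pow_right_mono hcJ mU
      have h1 : a m - a l ∈ I 0 ^ (cJ * mU) := by
        have h2 := sub_mem (hincr hm) (hincr hl)
        rwa [show a m - a (cJ * mU) - (a l - a (cJ * mU)) = a m - a l by ring] at h2
      exact hJm h1
    obtain ⟨aL, haL⟩ := hA.complete a hcauchy
    refine ⟨aL, ?_⟩
    have hzero : ∀ M, (b - φ aL).1 M = 0 := by
      intro M
      obtain ⟨m, hm⟩ := hSmall M
      have hmap := hmapPow M m hm
      have h1 : b - φ (a m) ∈ bI M := hmap (haP m)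
      have h2 : aL - a m ∈ I 0 ^ m := by
        obtain ⟨K, hK⟩ := haL _ (hI0nhds m)
        have h3 : aL - a (max K m) ∈ (I 0 ^ m : Ideal A) := hK _ (le_max_left _ _)
        have h4 : a (max K m) - a m ∈ I 0 ^ m := hincr (le_max_right _ _)
        have h5 := add_mem h3 h4
        rwa [show aL - a (max K m) + (a (max K m) - a m) = aL - a m by ring] at h5
      have h5 : φ (aL - a m) ∈ bI M := by
        have h6 : Ideal.map φ (I 0 ^ m) ≤ bI M := by rw [Ideal.map_pow]; exact hmap
        exact h6 (Ideal.mem_map_of_mem φ h2)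
      have h6 : b - φ aL ∈ bI M := by
        have h7 := sub_mem h1 h5
        rwa [show b - φ (a m) - φ (aL - a m) = b - φ aL by rw [map_sub]; ring] at h7
      exact (mem_kerPrj I hdesc).mp h6
    have h8 : b - φ aL = 0 := Subtype.ext (funext fun M => hzero M)
    exact (sub_eq_zero.mp h8).symm
  refine ⟨hsurj, fun s => ⟨?_, ?_⟩⟩
  · intro hs
    obtain ⟨M, hM⟩ := (hbasis s).mp hs
    obtain ⟨m, hm⟩ := hSmall M
    exact ⟨m, subset_trans (SetLike.coe_subset_coe.mpr (hmapPow M m hm)) hM⟩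
  · rintro ⟨m, hm⟩
    obtain ⟨M, hM⟩ := claimD m
    exact (hbasis s).mpr ⟨M, subset_trans (SetLike.coe_subset_coe.mpr hM) hm⟩
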